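/- Let X be a δ-hyperbolic space with Busemann function b based at ξ ∈ ∂∞X. For any η, ζ ∈ ∂∞X ∖ {ξ} and any Gromov sequences {x_i} ∈ η and {y_i} ∈ ζ: (η|ζ)_b ≤ liminf_i (x_i|y_i)_b ≤ limsup_i (x_i|y_i)_b ≤ (η|ζ)_b + 44δ. -/

import Mathlib

open Set Metric Filter

noncomputable section

/-- Gromov product (x|y)_o. -/
def gp {X : Type*} [MetricSpace X] (o x y : X) : ℝ :=
  (dist x o + dist y o - dist x y) / 2

/-- `X` is Gromov δ-hyperbolic. -/
def IsGromovHyp (X : Type*) [MetricSpace X] (δ : ℝ) : Prop :=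
  ∀ o x y z : X, min (gp o x z) (gp o z y) - δ ≤ gp o x y

/-- A Gromov sequence: (x_i | x_j)_o → ∞. -/
def IsGromovSeq {X : Type*} [MetricSpace X] (o : X) (s : ℕ → X) : Prop :=
  Tendsto (fun p : ℕ × ℕ => gp o (s p.1) (s p.2)) atTop atTop

/-- Equivalence of Gromov sequences: (x_i | y_i)_o → ∞. -/
def GromovEquiv {X : Type*} [MetricSpace X] (o : X) (s t : ℕ → X) : Prop :=
  Tendsto (fun i => gp o (s i) (t i)) atTop atTop

/-- Gromov product (x|ξ)_p of a point and a boundary point (represented by the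
Gromov sequence `ξ`), defined as the infimum over representatives of the class
of `ξ` of the liminf of Gromov products. -/
def gpPt {X : Type*} [MetricSpace X] (o p x : X) (ξ : ℕ → X) : ℝ :=
  sInf {r | ∃ s : ℕ → X, IsGromovSeq o s ∧ GromovEquiv o ξ s ∧
    r = liminf (fun i => gp p x (s i)) atTop}

/-- Gromov product (ξ|ζ)_p of two boundary points. -/
def gpPt2 {X : Type*} [MetricSpace X] (o p : X) (ξ ζ : ℕ → X) : ℝ :=
  sInf {r | ∃ s t : ℕ → X, IsGromovSeq o s ∧ IsGromovSeq o t ∧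
    GromovEquiv o ξ s ∧ GromovEquiv o ζ t ∧
    r = liminf (fun i => gp p (s i) (t i)) atTop}

/-- The Busemann function based at the boundary point `ξ`:
`b(x) = (o|ξ)_x − (x|ξ)_o`. -/
def bus {X : Type*} [MetricSpace X] (o : X) (ξ : ℕ → X) (x : X) : ℝ :=
  gpPt o x o ξ - gpPt o o x ξ

/-- The Gromov product based at the Busemann function `b` of `ξ`:
`(x|y)_b = (b(x)+b(y)−d(x,y))/2`. -/
def gpb {X : Type*} [MetricSpace X] (o : X) (ξ : ℕ → X) (x y : X) : ℝ :=
  (bus o ξ x + bus o ξ y - dist x y) / 2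

/-- The Gromov product based at `b` of two boundary points. -/
def gpbBdry {X : Type*} [MetricSpace X] (o : X) (ξ η ζ : ℕ → X) : ℝ :=
  sInf {r | ∃ s t : ℕ → X, IsGromovSeq o s ∧ IsGromovSeq o t ∧
    GromovEquiv o η s ∧ GromovEquiv o ζ t ∧
    r = liminf (fun i => gpb o ξ (s i) (t i)) atTop}

section Aux

variable {X : Type*} [MetricSpace X] {δ : ℝ} {o : X}

lemma gp_comm' (o x y : X) : gp o x y = gp o y x := by
  unfold gp; rw [dist_comm x y]; ring

lemma gp_nonneg' (o x y : X) : 0 ≤ gp o x y := by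
  unfold gp
  have h := dist_triangle x o y
  have h2 : dist o y = dist y o := dist_comm o y
  linarith

lemma gp_le_left' (o x y : X) : gp o x y ≤ dist x o := by
  unfold gp
  have h := dist_triangle y x o
  have h2 : dist y x = dist x y := dist_comm y x
  linarith

lemma gp_flip (x o z : X) : gp x o z = dist x o - gp o x z := by
  unfold gp
  rw [dist_comm o x, dist_comm z x, dist_comm o z]
  ring

lemma min_ineq {a b c : ℝ} (h : min a b - δ ≤ c) (hb : c + δ < a) : b ≤ c + δ := by
  rcases le_total a b with h' | h'
  · rw [min_eq_left h'] at h; linarith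
  · rw [min_eq_right h'] at h; linarith

/-- joint divergence of Gromov products of two sequences -/
def JT (o : X) (u v : ℕ → X) : Prop :=
  ∀ C : ℝ, ∃ N : ℕ, ∀ i ≥ N, ∀ j ≥ N, C ≤ gp o (u i) (v j)

lemma jt_symm {u v : ℕ → X} (h : JT o u v) : JT o v u := by
  intro C
  obtain ⟨N, hN⟩ := h C
  exact ⟨N, fun i hi j hj => (gp_comm' o (v i) (u j)) ▸ hN j hj i hi⟩

lemma seq_jt {s : ℕ → X} (hs : IsGromovSeq o s) : JT o s s := by
  intro C
  obtain ⟨⟨N1, N2⟩, hN⟩ := eventually_atTop.1 (tendsto_atTop.1 hs C)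
  refine ⟨max N1 N2, fun i hi j hj => ?_⟩
  exact hN (i, j) ⟨le_trans (le_max_left _ _) hi, le_trans (le_max_right _ _) hj⟩

lemma equiv_diag {u v : ℕ → X} (h : GromovEquiv o u v) :
    ∀ C : ℝ, ∃ N, ∀ i ≥ N, C ≤ gp o (u i) (v i) := fun C =>
  eventually_atTop.1 (tendsto_atTop.1 h C)

lemma equiv_symm' {u v : ℕ → X} (h : GromovEquiv o u v) : GromovEquiv o v u := by
  have : (fun i => gp o (v i) (u i)) = fun i => gp o (u i) (v i) := by
    funext i; exact gp_comm' o (v i) (u i)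
  unfold GromovEquiv
  rw [this]; exact h

lemma seq_refl {s : ℕ → X} (hs : IsGromovSeq o s) : GromovEquiv o s s := by
  refine tendsto_atTop.2 fun C => ?_
  obtain ⟨N, hN⟩ := seq_jt hs C
  exact eventually_atTop.2 ⟨N, fun i hi => hN i hi i hi⟩

lemma equiv_jt (hX : IsGromovHyp X δ) {u c : ℕ → X}
    (h : GromovEquiv o u c) (hc : IsGromovSeq o c) : JT o u c := by
  intro C
  obtain ⟨N1, h1⟩ := seq_jt hc (C + δ)
  obtain ⟨N2, h2⟩ := equiv_diag h (C + δ)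
  refine ⟨max N1 N2, fun i hi j hj => ?_⟩
  have hx := hX o (u i) (c j) (c i)
  have a1 : C + δ ≤ gp o (u i) (c i) := h2 i (le_trans (le_max_right _ _) hi)
  have a2 : C + δ ≤ gp o (c i) (c j) :=
    h1 i (le_trans (le_max_left _ _) hi) j (le_trans (le_max_left _ _) hj)
  have := le_min a1 a2
  linarith

lemma jt_trans (hX : IsGromovHyp X δ) {u c v : ℕ → X}
    (h1 : JT o u c) (h2 : JT o c v) : JT o u v := by
  intro C
  obtain ⟨N1, h1'⟩ := h1 (C + δ)
  obtain ⟨N2, h2'⟩ := h2 (C + δ)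
  refine ⟨max N1 N2, fun i hi j hj => ?_⟩
  have hx := hX o (u i) (v j) (c (max N1 N2))
  have a1 : C + δ ≤ gp o (u i) (c (max N1 N2)) :=
    h1' i (le_trans (le_max_left _ _) hi) _ (le_max_left _ _)
  have a2 : C + δ ≤ gp o (c (max N1 N2)) (v j) :=
    h2' _ (le_max_right _ _) j (le_trans (le_max_right _ _) hj)
  have := le_min a1 a2
  linarith

lemma jt_tendsto {u v : ℕ → X} (h : JT o u v) :
    Tendsto (fun i => gp o (u i) (v i)) atTop atTop := by
  refine tendsto_atTop.2 fun C => ?_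
  obtain ⟨N, hN⟩ := h C
  exact eventually_atTop.2 ⟨N, fun i hi => hN i hi i hi⟩

lemma bdd_of_not_equiv (hδ : 0 ≤ δ) (hX : IsGromovHyp X δ) {a b u v : ℕ → X}
    (hab : ¬ GromovEquiv o a b) (h1 : JT o u a) (h2 : JT o v b) :
    ∃ M N, ∀ i ≥ N, ∀ j ≥ N, gp o (u i) (v j) ≤ M := by
  obtain ⟨C, hC⟩ : ∃ C : ℝ, ∃ᶠ m in atTop, gp o (a m) (b m) < C := by
    by_contra hcon
    push_neg at hcon
    refine hab (tendsto_atTop.2 fun C => ?_)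
    have h := hcon C
    exact h
  obtain ⟨N1, h1'⟩ := h1 (C + δ + 1)
  obtain ⟨N2, h2'⟩ := h2 (C + 2 * δ + 1)
  set N := max N1 N2 with hNdef
  obtain ⟨m, hmN, hmC⟩ := ((eventually_ge_atTop N).and_frequently hC).exists
  have hmN1 : N1 ≤ m := le_trans (le_max_left _ _) hmN
  have hmN2 : N2 ≤ m := le_trans (le_max_right _ _) hmN
  refine ⟨C + 2 * δ, N, fun i hi j hj => ?_⟩
  have hiN1 : N1 ≤ i := le_trans (le_max_left _ _) hi
  have hjN2 : N2 ≤ j := le_trans (le_max_right _ _) hj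
  -- step 1 : gp o (u i) (b m) ≤ gp o (a m) (b m) + δ
  have s1 : gp o (u i) (b m) ≤ gp o (a m) (b m) + δ := by
    have hx := hX o (a m) (b m) (u i)
    have e1 : gp o (a m) (u i) = gp o (u i) (a m) := gp_comm' _ _ _
    have hbig : gp o (a m) (b m) + δ < gp o (a m) (u i) := by
      rw [e1]; have := h1' i hiN1 m hmN1; linarith
    exact min_ineq hx hbig
  -- step 2
  have hx2 := hX o (b m) (u i) (v j)
  have e2 : gp o (b m) (v j) = gp o (v j) (b m) := gp_comm' _ _ _
  have e3 : gp o (b m) (u i) = gp o (u i) (b m) := gp_comm' _ _ _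
  have hbig2 : gp o (b m) (u i) + δ < gp o (b m) (v j) := by
    rw [e2, e3]
    have := h2' j hjN2 m hmN2
    linarith
  have s2 : gp o (v j) (u i) ≤ gp o (b m) (u i) + δ := min_ineq hx2 hbig2
  have e4 : gp o (u i) (v j) = gp o (v j) (u i) := gp_comm' _ _ _
  linarith

end Aux

section Aux2

variable {X : Type*} [MetricSpace X] {δ : ℝ} {o : X} {ξ : ℕ → X}

/-- liminf of the Gromov products with a sequence. -/
def Lf (o : X) (ξ : ℕ → X) (x : X) : ℝ := liminf (fun k => gp o x (ξ k)) atTop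

lemma bddA (x : X) (s : ℕ → X) :
    IsBoundedUnder (· ≤ ·) atTop (fun k => gp o x (s k)) :=
  isBoundedUnder_of ⟨dist x o, fun k => gp_le_left' o x (s k)⟩

lemma bddB (x : X) (s : ℕ → X) :
    IsBoundedUnder (· ≥ ·) atTop (fun k => gp o x (s k)) :=
  isBoundedUnder_of ⟨0, fun k => gp_nonneg' o x (s k)⟩

lemma evBoundedLe {f : ℕ → ℝ} {M : ℝ} {N : ℕ} (h : ∀ i ≥ N, f i ≤ M) :
    IsBoundedUnder (· ≤ ·) atTop f :=
  ⟨M, eventually_map.2 (eventually_atTop.2 ⟨N, h⟩)⟩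

lemma evBoundedGe {f : ℕ → ℝ} {M : ℝ} {N : ℕ} (h : ∀ i ≥ N, M ≤ f i) :
    IsBoundedUnder (· ≥ ·) atTop f :=
  ⟨M, eventually_map.2 (eventually_atTop.2 ⟨N, h⟩)⟩

lemma Lf_nonneg (x : X) : 0 ≤ Lf o ξ x :=
  le_liminf_of_le (bddA x ξ).isCoboundedUnder_ge
    (Eventually.of_forall fun k => gp_nonneg' o x (ξ k))

lemma Lf_le_dist (x : X) : Lf o ξ x ≤ dist x o :=
  liminf_le_of_frequently_le
    ((Eventually.of_forall fun k => gp_le_left' o x (ξ k)).frequently) (bddB x ξ)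

lemma liminf_comp (hX : IsGromovHyp X δ) {c s : ℕ → X} (x : X) (h : GromovEquiv o c s) :
    liminf (fun i => gp o x (c i)) atTop - δ ≤ liminf (fun i => gp o x (s i)) atTop := by
  have hev : ∀ᶠ i in atTop, gp o x (c i) - δ ≤ gp o x (s i) := by
    filter_upwards [tendsto_atTop.1 h (dist x o)] with i hi
    have hx := hX o x (s i) (c i)
    have hmin : min (gp o x (c i)) (gp o (c i) (s i)) = gp o x (c i) :=
      min_eq_left (le_trans (gp_le_left' o x (c i)) hi)
    rw [hmin] at hx
    linarith
  have e1 : liminf (fun i => gp o x (c i) - δ) atTop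
      = liminf (fun i => gp o x (c i)) atTop - δ :=
    liminf_sub_const atTop _ δ ((bddA x c).isCoboundedUnder_ge) (bddB x c)
  rw [← e1]
  exact liminf_le_liminf hev
    (isBoundedUnder_of ⟨-δ, fun k => by linarith [gp_nonneg' o x (c k)]⟩)
    ((bddA x s).isCoboundedUnder_ge)

lemma limsup_le_liminf_add (hX : IsGromovHyp X δ) {s : ℕ → X} (x : X)
    (hs : IsGromovSeq o s) :
    limsup (fun i => gp o x (s i)) atTop ≤ liminf (fun i => gp o x (s i)) atTop + δ := by
  obtain ⟨N, hN⟩ := seq_jt hs (dist x o)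
  refine limsup_le_of_le (bddB x s).isCoboundedUnder_le ?_
  filter_upwards [eventually_ge_atTop N] with j hj
  have key : ∀ i ≥ N, gp o x (s j) - δ ≤ gp o x (s i) := by
    intro i hi
    have hx := hX o x (s i) (s j)
    have hmin : min (gp o x (s j)) (gp o (s j) (s i)) = gp o x (s j) :=
      min_eq_left (le_trans (gp_le_left' o x (s j)) (hN j hj i hi))
    rw [hmin] at hx
    linarith
  have h2 : gp o x (s j) - δ ≤ liminf (fun i => gp o x (s i)) atTop :=
    le_liminf_of_le (bddA x s).isCoboundedUnder_ge (eventually_atTop.2 ⟨N, key⟩)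
  linarith

lemma gpPt_o_bounds (hX : IsGromovHyp X δ) (hξ : IsGromovSeq o ξ) (x : X) :
    Lf o ξ x - δ ≤ gpPt o o x ξ ∧ gpPt o o x ξ ≤ Lf o ξ x := by
  have hmem : Lf o ξ x ∈ {r | ∃ s : ℕ → X, IsGromovSeq o s ∧ GromovEquiv o ξ s ∧
      r = liminf (fun i => gp o x (s i)) atTop} := ⟨ξ, hξ, seq_refl hξ, rfl⟩
  have hlb : ∀ r ∈ {r | ∃ s : ℕ → X, IsGromovSeq o s ∧ GromovEquiv o ξ s ∧
      r = liminf (fun i => gp o x (s i)) atTop}, Lf o ξ x - δ ≤ r := by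
    rintro r ⟨s, _, hequiv, rfl⟩
    exact liminf_comp hX x hequiv
  exact ⟨le_csInf ⟨_, hmem⟩ hlb, csInf_le ⟨Lf o ξ x - δ, hlb⟩ hmem⟩

lemma gpPt_x_bounds (hX : IsGromovHyp X δ) (hξ : IsGromovSeq o ξ) (x : X) :
    dist x o - Lf o ξ x - 2 * δ ≤ gpPt o x o ξ ∧ gpPt o x o ξ ≤ dist x o - Lf o ξ x := by
  have hrep : ∀ (s : ℕ → X), liminf (fun i => gp x o (s i)) atTop
      = dist x o - limsup (fun i => gp o x (s i)) atTop := by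
    intro s
    have hfun : (fun i => gp x o (s i)) = fun i => dist x o - gp o x (s i) := by
      funext i; exact gp_flip x o (s i)
    rw [hfun]
    exact liminf_const_sub atTop _ _ (bddA x s) ((bddB x s).isCoboundedUnder_le)
  have hlb : ∀ r ∈ {r | ∃ s : ℕ → X, IsGromovSeq o s ∧ GromovEquiv o ξ s ∧
      r = liminf (fun i => gp x o (s i)) atTop}, dist x o - Lf o ξ x - 2 * δ ≤ r := by
    rintro r ⟨s, hsS, hequiv, rfl⟩
    rw [hrep s]
    have h1 : limsup (fun i => gp o x (s i)) atTop
        ≤ liminf (fun i => gp o x (s i)) atTop + δ := limsup_le_liminf_add hX x hsS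
    have h2 : liminf (fun i => gp o x (s i)) atTop - δ ≤ Lf o ξ x :=
      liminf_comp hX x (equiv_symm' hequiv)
    linarith
  have hmem : dist x o - limsup (fun i => gp o x (ξ i)) atTop ∈
      {r | ∃ s : ℕ → X, IsGromovSeq o s ∧ GromovEquiv o ξ s ∧
      r = liminf (fun i => gp x o (s i)) atTop} := ⟨ξ, hξ, seq_refl hξ, (hrep ξ).symm⟩
  constructor
  · exact le_csInf ⟨_, hmem⟩ hlb
  · have hupper : dist x o - limsup (fun i => gp o x (ξ i)) atTop ≤ dist x o - Lf o ξ x := by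
      have : Lf o ξ x ≤ limsup (fun i => gp o x (ξ i)) atTop :=
        liminf_le_limsup (bddA x ξ) (bddB x ξ)
      linarith
    exact le_trans (csInf_le ⟨dist x o - Lf o ξ x - 2 * δ, hlb⟩ hmem) hupper

lemma bus_bounds (hX : IsGromovHyp X δ) (hξ : IsGromovSeq o ξ) (x : X) :
    dist x o - 2 * Lf o ξ x - 2 * δ ≤ bus o ξ x ∧
    bus o ξ x ≤ dist x o - 2 * Lf o ξ x + 2 * δ := by
  obtain ⟨h1, h2⟩ := gpPt_o_bounds hX hξ x
  obtain ⟨h3, h4⟩ := gpPt_x_bounds hX hξ x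
  unfold bus
  constructor <;> linarith

lemma gpb_bounds (hX : IsGromovHyp X δ) (hξ : IsGromovSeq o ξ) (x y : X) :
    gp o x y - Lf o ξ x - Lf o ξ y - 2 * δ ≤ gpb o ξ x y ∧
    gpb o ξ x y ≤ gp o x y - Lf o ξ x - Lf o ξ y + 2 * δ := by
  obtain ⟨h1, h2⟩ := bus_bounds hX hξ x
  obtain ⟨h3, h4⟩ := bus_bounds hX hξ y
  unfold gpb gp
  constructor <;> linarith

lemma Lf_comp (hX : IsGromovHyp X δ) {x x' : X} {B : ℝ} {K : ℕ}
    (hb : ∀ k ≥ K, gp o x' (ξ k) ≤ B) (hxx : B < gp o x x') :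
    Lf o ξ x' - δ ≤ Lf o ξ x := by
  have hev : ∀ᶠ k in atTop, gp o x' (ξ k) - δ ≤ gp o x (ξ k) := by
    filter_upwards [eventually_ge_atTop K] with k hk
    have hx2 := hX o x (ξ k) x'
    have hmin : min (gp o x x') (gp o x' (ξ k)) = gp o x' (ξ k) :=
      min_eq_right (le_of_lt (lt_of_le_of_lt (hb k hk) hxx))
    rw [hmin] at hx2
    linarith
  have e1 : liminf (fun k => gp o x' (ξ k) - δ) atTop = Lf o ξ x' - δ :=
    liminf_sub_const atTop _ δ ((bddA x' ξ).isCoboundedUnder_ge) (bddB x' ξ)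
  rw [← e1]
  exact liminf_le_liminf hev
    (isBoundedUnder_of ⟨-δ, fun k => by linarith [gp_nonneg' o x' (ξ k)]⟩)
    ((bddA x ξ).isCoboundedUnder_ge)

lemma Lf_le_of_bound {u : ℕ → X} {M : ℝ} {N : ℕ}
    (h : ∀ i ≥ N, ∀ k ≥ N, gp o (u i) (ξ k) ≤ M) :
    ∀ i ≥ N, Lf o ξ (u i) ≤ M := fun i hi =>
  liminf_le_of_frequently_le
    ((eventually_atTop.2 ⟨N, fun k hk => h i hi k hk⟩).frequently) (bddB (u i) ξ)

end Aux2

section Aux3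

variable {X : Type*} [MetricSpace X] {δ : ℝ} {o : X} {ξ η ζ : ℕ → X}

lemma comp_main (hδ : 0 ≤ δ) (hX : IsGromovHyp X δ)
    (hξ : IsGromovSeq o ξ) (hη : IsGromovSeq o η) (hζ : IsGromovSeq o ζ)
    (hηξ : ¬ GromovEquiv o η ξ) (hζξ : ¬ GromovEquiv o ζ ξ) (hηζ : ¬ GromovEquiv o η ζ)
    {x y s t : ℕ → X}
    (hx : GromovEquiv o η x) (hy : GromovEquiv o ζ y)
    (hs : GromovEquiv o η s) (ht : GromovEquiv o ζ t) :
    ∃ N, ∀ i ≥ N, ∀ j ≥ N, gpb o ξ (x i) (y i) ≤ gpb o ξ (s j) (t j) + 8 * δ := by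
  have Jxη : JT o x η := equiv_jt hX (equiv_symm' hx) hη
  have Jyζ : JT o y ζ := equiv_jt hX (equiv_symm' hy) hζ
  have Jsη : JT o s η := equiv_jt hX (equiv_symm' hs) hη
  have Jtζ : JT o t ζ := equiv_jt hX (equiv_symm' ht) hζ
  have Jxs : JT o x s := jt_trans hX Jxη (jt_symm Jsη)
  have Jyt : JT o y t := jt_trans hX Jyζ (jt_symm Jtζ)
  have Jξξ : JT o ξ ξ := seq_jt hξ
  obtain ⟨M1, K1, hM1⟩ := bdd_of_not_equiv hδ hX hηζ Jxη Jtζ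
  obtain ⟨M2, K2, hM2⟩ := bdd_of_not_equiv hδ hX hηζ Jsη Jtζ
  obtain ⟨M4, K4, hM4⟩ := bdd_of_not_equiv hδ hX hηξ Jsη Jξξ
  obtain ⟨M6, K6, hM6⟩ := bdd_of_not_equiv hδ hX hζξ Jtζ Jξξ
  obtain ⟨K7, h7⟩ := Jyt (max M1 M6 + δ + 1)
  obtain ⟨K8, h8⟩ := Jxs (max M2 M4 + δ + 1)
  refine ⟨max (max (max K1 K2) (max K4 K6)) (max K7 K8), fun i hi j hj => ?_⟩
  set N := max (max (max K1 K2) (max K4 K6)) (max K7 K8) with hNdef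
  have hiK1 : K1 ≤ i := le_trans (le_trans (le_trans (le_max_left _ _) (le_max_left _ _)) (le_max_left _ _)) hi
  have hjK1 : K1 ≤ j := le_trans (le_trans (le_trans (le_max_left _ _) (le_max_left _ _)) (le_max_left _ _)) hj
  have hiK2 : K2 ≤ i := le_trans (le_trans (le_trans (le_max_right _ _) (le_max_left _ _)) (le_max_left _ _)) hi
  have hjK2 : K2 ≤ j := le_trans (le_trans (le_trans (le_max_right _ _) (le_max_left _ _)) (le_max_left _ _)) hj
  have hiK4 : K4 ≤ i := le_trans (le_trans (le_trans (le_max_left _ _) (le_max_right _ _)) (le_max_left _ _)) hi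
  have hjK4 : K4 ≤ j := le_trans (le_trans (le_trans (le_max_left _ _) (le_max_right _ _)) (le_max_left _ _)) hj
  have hiK6 : K6 ≤ i := le_trans (le_trans (le_trans (le_max_right _ _) (le_max_right _ _)) (le_max_left _ _)) hi
  have hjK6 : K6 ≤ j := le_trans (le_trans (le_trans (le_max_right _ _) (le_max_right _ _)) (le_max_left _ _)) hj
  have hiK7 : K7 ≤ i := le_trans (le_trans (le_max_left _ _) (le_max_right _ _)) hi
  have hjK7 : K7 ≤ j := le_trans (le_trans (le_max_left _ _) (le_max_right _ _)) hj
  have hiK8 : K8 ≤ i := le_trans (le_trans (le_max_right _ _) (le_max_right _ _)) hi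
  have hjK8 : K8 ≤ j := le_trans (le_trans (le_max_right _ _) (le_max_right _ _)) hj
  -- step a : gp o (x i) (y i) ≤ gp o (x i) (t j) + δ
  have hxt : gp o (x i) (t j) ≤ M1 := hM1 i hiK1 j hjK1
  have ha : gp o (x i) (y i) ≤ gp o (x i) (t j) + δ := by
    have hhyp := hX o (t j) (x i) (y i)
    have e1 : gp o (t j) (y i) = gp o (y i) (t j) := gp_comm' _ _ _
    have e2 : gp o (t j) (x i) = gp o (x i) (t j) := gp_comm' _ _ _
    have hbig : gp o (t j) (x i) + δ < gp o (t j) (y i) := by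
      rw [e1, e2]
      have := h7 i hiK7 j hjK7
      have hM1' : M1 ≤ max M1 M6 := le_max_left _ _
      linarith
    have := min_ineq hhyp hbig
    have e3 : gp o (y i) (x i) = gp o (x i) (y i) := gp_comm' _ _ _
    linarith
  -- step b : gp o (x i) (t j) ≤ gp o (s j) (t j) + δ
  have hst : gp o (s j) (t j) ≤ M2 := hM2 j hjK2 j hjK2
  have hb : gp o (x i) (t j) ≤ gp o (s j) (t j) + δ := by
    have hhyp := hX o (s j) (t j) (x i)
    have e1 : gp o (s j) (x i) = gp o (x i) (s j) := gp_comm' _ _ _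
    have hbig : gp o (s j) (t j) + δ < gp o (s j) (x i) := by
      rw [e1]
      have := h8 i hiK8 j hjK8
      have hM2' : M2 ≤ max M2 M4 := le_max_left _ _
      linarith
    exact min_ineq hhyp hbig
  -- step c : Lf (s j) - δ ≤ Lf (x i)
  have hc : Lf o ξ (s j) - δ ≤ Lf o ξ (x i) := by
    refine Lf_comp hX (fun k hk => hM4 j hjK4 k hk) ?_
    have := h8 i hiK8 j hjK8
    have hM4' : M4 ≤ max M2 M4 := le_max_right _ _
    linarith
  -- step d : Lf (t j) - δ ≤ Lf (y i)
  have hd : Lf o ξ (t j) - δ ≤ Lf o ξ (y i) := by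
    refine Lf_comp hX (fun k hk => hM6 j hjK6 k hk) ?_
    have := h7 i hiK7 j hjK7
    have hM6' : M6 ≤ max M1 M6 := le_max_right _ _
    linarith
  have he := (gpb_bounds hX hξ (x i) (y i)).2
  have hf := (gpb_bounds hX hξ (s j) (t j)).1
  linarith

lemma gpb_seq_bounds (hδ : 0 ≤ δ) (hX : IsGromovHyp X δ)
    (hξ : IsGromovSeq o ξ) (hη : IsGromovSeq o η) (hζ : IsGromovSeq o ζ)
    (hηξ : ¬ GromovEquiv o η ξ) (hζξ : ¬ GromovEquiv o ζ ξ) (hηζ : ¬ GromovEquiv o η ζ)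
    {x y : ℕ → X} (hx : GromovEquiv o η x) (hy : GromovEquiv o ζ y) :
    ∃ N m M, ∀ i ≥ N, m ≤ gpb o ξ (x i) (y i) ∧ gpb o ξ (x i) (y i) ≤ M := by
  have Jxη : JT o x η := equiv_jt hX (equiv_symm' hx) hη
  have Jyζ : JT o y ζ := equiv_jt hX (equiv_symm' hy) hζ
  have Jξξ : JT o ξ ξ := seq_jt hξ
  obtain ⟨Mxy, Kxy, hMxy⟩ := bdd_of_not_equiv hδ hX hηζ Jxη Jyζ
  obtain ⟨Bx, Kx, hBx⟩ := bdd_of_not_equiv hδ hX hηξ Jxη Jξξ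
  obtain ⟨By, Ky, hBy⟩ := bdd_of_not_equiv hδ hX hζξ Jyζ Jξξ
  refine ⟨max Kxy (max Kx Ky), -Bx - By - 2 * δ, Mxy + 2 * δ, fun i hi => ?_⟩
  have hiKxy : Kxy ≤ i := le_trans (le_max_left _ _) hi
  have hiKx : Kx ≤ i := le_trans (le_trans (le_max_left _ _) (le_max_right _ _)) hi
  have hiKy : Ky ≤ i := le_trans (le_trans (le_max_right _ _) (le_max_right _ _)) hi
  have hLx : Lf o ξ (x i) ≤ Bx := Lf_le_of_bound hBx i hiKx
  have hLy : Lf o ξ (y i) ≤ By := Lf_le_of_bound hBy i hiKy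
  have hLx0 : 0 ≤ Lf o ξ (x i) := Lf_nonneg _
  have hLy0 : 0 ≤ Lf o ξ (y i) := Lf_nonneg _
  have hgxy : gp o (x i) (y i) ≤ Mxy := hMxy i hiKxy i hiKxy
  have hg0 : 0 ≤ gp o (x i) (y i) := gp_nonneg' _ _ _
  obtain ⟨hlo, hhi⟩ := gpb_bounds hX hξ (x i) (y i)
  constructor <;> linarith

lemma compare_limsup_liminf (hδ : 0 ≤ δ) (hX : IsGromovHyp X δ)
    (hξ : IsGromovSeq o ξ) (hη : IsGromovSeq o η) (hζ : IsGromovSeq o ζ)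
    (hηξ : ¬ GromovEquiv o η ξ) (hζξ : ¬ GromovEquiv o ζ ξ) (hηζ : ¬ GromovEquiv o η ζ)
    {x y s t : ℕ → X}
    (hx : GromovEquiv o η x) (hy : GromovEquiv o ζ y)
    (hs : GromovEquiv o η s) (ht : GromovEquiv o ζ t) :
    limsup (fun i => gpb o ξ (x i) (y i)) atTop ≤
      liminf (fun j => gpb o ξ (s j) (t j)) atTop + 8 * δ := by
  obtain ⟨N, hN⟩ := comp_main hδ hX hξ hη hζ hηξ hζξ hηζ hx hy hs ht
  obtain ⟨Na, ma, Ma, ha⟩ := gpb_seq_bounds hδ hX hξ hη hζ hηξ hζξ hηζ hx hy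
  obtain ⟨Nb, mb, Mb, hb⟩ := gpb_seq_bounds hδ hX hξ hη hζ hηξ hζξ hηζ hs ht
  have hxyCo : IsBoundedUnder (· ≥ ·) atTop (fun i => gpb o ξ (x i) (y i)) :=
    evBoundedGe (fun i hi => (ha i hi).1)
  have hstUp : IsBoundedUnder (· ≤ ·) atTop (fun j => gpb o ξ (s j) (t j)) :=
    evBoundedLe (fun j hj => (hb j hj).2)
  refine limsup_le_of_le hxyCo.isCoboundedUnder_le ?_
  filter_upwards [eventually_ge_atTop N] with i hi
  have hkey : gpb o ξ (x i) (y i) - 8 * δ ≤ liminf (fun j => gpb o ξ (s j) (t j)) atTop := by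
    refine le_liminf_of_le hstUp.isCoboundedUnder_ge ?_
    refine eventually_atTop.2 ⟨N, fun j hj => ?_⟩
    linarith [hN i hi j hj]
  linarith

end Aux3

section Aux4

variable {X : Type*} [MetricSpace X] {δ : ℝ} {o : X} {ξ η ζ : ℕ → X}

lemma junk_liminf {f : ℕ → ℝ} (h : Tendsto f atTop atTop) : liminf f atTop = 0 := by
  rw [liminf_eq]
  have he : {a : ℝ | ∀ᶠ n in atTop, a ≤ f n} = univ :=
    eq_univ_of_forall fun a => tendsto_atTop.1 h a
  rw [he, Real.sSup_univ]

lemma junk_limsup {f : ℕ → ℝ} (h : Tendsto f atTop atTop) : limsup f atTop = 0 := by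
  rw [limsup_eq]
  have he : {a : ℝ | ∀ᶠ n in atTop, f n ≤ a} = ∅ := by
    ext a
    simp only [mem_setOf_eq, mem_empty_iff_false, iff_false]
    intro ha
    obtain ⟨n, h1, h2⟩ := (ha.and (tendsto_atTop.1 h (a + 1))).exists
    linarith
  rw [he, Real.sInf_empty]

lemma gpb_tendsto_case1 (hδ : 0 ≤ δ) (hX : IsGromovHyp X δ)
    (hξ : IsGromovSeq o ξ) (hη : IsGromovSeq o η) (hζ : IsGromovSeq o ζ)
    (hηξ : ¬ GromovEquiv o η ξ) (hζξ : ¬ GromovEquiv o ζ ξ) (hηζ : GromovEquiv o η ζ)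
    {s t : ℕ → X} (hs : GromovEquiv o η s) (ht : GromovEquiv o ζ t) :
    Tendsto (fun j => gpb o ξ (s j) (t j)) atTop atTop := by
  have Jsη : JT o s η := equiv_jt hX (equiv_symm' hs) hη
  have Jtζ : JT o t ζ := equiv_jt hX (equiv_symm' ht) hζ
  have Jηζ : JT o η ζ := equiv_jt hX hηζ hζ
  have Jst : JT o s t := jt_trans hX (jt_trans hX Jsη Jηζ) (jt_symm Jtζ)
  have Jξξ : JT o ξ ξ := seq_jt hξ
  obtain ⟨Bs, Ks, hBs⟩ := bdd_of_not_equiv hδ hX hηξ Jsη Jξξ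
  obtain ⟨Bt, Kt, hBt⟩ := bdd_of_not_equiv hδ hX hζξ Jtζ Jξξ
  refine tendsto_atTop.2 fun C => ?_
  obtain ⟨N0, h0⟩ := Jst (C + Bs + Bt + 2 * δ)
  refine eventually_atTop.2 ⟨max N0 (max Ks Kt), fun j hj => ?_⟩
  have hjN0 : N0 ≤ j := le_trans (le_max_left _ _) hj
  have hjKs : Ks ≤ j := le_trans (le_trans (le_max_left _ _) (le_max_right _ _)) hj
  have hjKt : Kt ≤ j := le_trans (le_trans (le_max_right _ _) (le_max_right _ _)) hj
  have hLs : Lf o ξ (s j) ≤ Bs := Lf_le_of_bound hBs j hjKs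
  have hLt : Lf o ξ (t j) ≤ Bt := Lf_le_of_bound hBt j hjKt
  have hg := h0 j hjN0 j hjN0
  have hlo := (gpb_bounds hX hξ (s j) (t j)).1
  linarith

end Aux4

theorem stmt6 {X : Type*} [MetricSpace X] {δ : ℝ} (hδ : 0 ≤ δ) (hX : IsGromovHyp X δ)
    (o : X) (ξ : ℕ → X) (hξ : IsGromovSeq o ξ)
    (η ζ : ℕ → X) (hη : IsGromovSeq o η) (hζ : IsGromovSeq o ζ)
    (hηξ : ¬ GromovEquiv o η ξ) (hζξ : ¬ GromovEquiv o ζ ξ)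
    (xs ys : ℕ → X) (hxs : IsGromovSeq o xs) (hys : IsGromovSeq o ys)
    (hxsη : GromovEquiv o η xs) (hysζ : GromovEquiv o ζ ys) :
    gpbBdry o ξ η ζ ≤ liminf (fun i => gpb o ξ (xs i) (ys i)) atTop ∧
    liminf (fun i => gpb o ξ (xs i) (ys i)) atTop ≤
      limsup (fun i => gpb o ξ (xs i) (ys i)) atTop ∧
    limsup (fun i => gpb o ξ (xs i) (ys i)) atTop ≤ gpbBdry o ξ η ζ + 44 * δ := by
  by_cases hηζ : GromovEquiv o η ζ
  · -- η and ζ are equivalent: all quantities are junk value 0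
    have hxyT : Tendsto (fun i => gpb o ξ (xs i) (ys i)) atTop atTop :=
      gpb_tendsto_case1 hδ hX hξ hη hζ hηξ hζξ hηζ hxsη hysζ
    have hL0 : liminf (fun i => gpb o ξ (xs i) (ys i)) atTop = 0 := junk_liminf hxyT
    have hU0 : limsup (fun i => gpb o ξ (xs i) (ys i)) atTop = 0 := junk_limsup hxyT
    set S : Set ℝ := {r | ∃ s t : ℕ → X, IsGromovSeq o s ∧ IsGromovSeq o t ∧
      GromovEquiv o η s ∧ GromovEquiv o ζ t ∧
      r = liminf (fun i => gpb o ξ (s i) (t i)) atTop} with hSdef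
    have hEq : gpbBdry o ξ η ζ = sInf S := rfl
    have hall : ∀ r ∈ S, r = 0 := by
      rintro r ⟨s, t, hsS, htS, hs, ht, rfl⟩
      exact junk_liminf (gpb_tendsto_case1 hδ hX hξ hη hζ hηξ hζξ hηζ hs ht)
    have hmem : liminf (fun i => gpb o ξ (xs i) (ys i)) atTop ∈ S :=
      ⟨xs, ys, hxs, hys, hxsη, hysζ, rfl⟩
    have h0mem : (0 : ℝ) ∈ S := hL0 ▸ hmem
    have hsInf : gpbBdry o ξ η ζ = 0 := by
      rw [hEq]
      exact le_antisymm (csInf_le ⟨0, fun r hr => (hall r hr).ge⟩ h0mem)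
        (le_csInf ⟨0, h0mem⟩ fun r hr => (hall r hr).ge)
    refine ⟨?_, ?_, ?_⟩
    · rw [hsInf, hL0]
    · rw [hL0, hU0]
    · rw [hU0, hsInf]; linarith
  · -- η and ζ are not equivalent
    set S : Set ℝ := {r | ∃ s t : ℕ → X, IsGromovSeq o s ∧ IsGromovSeq o t ∧
      GromovEquiv o η s ∧ GromovEquiv o ζ t ∧
      r = liminf (fun i => gpb o ξ (s i) (t i)) atTop} with hSdef
    have hEq : gpbBdry o ξ η ζ = sInf S := rfl
    have hmem : liminf (fun i => gpb o ξ (xs i) (ys i)) atTop ∈ S :=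
      ⟨xs, ys, hxs, hys, hxsη, hysζ, rfl⟩
    have hub : ∀ r ∈ S, limsup (fun i => gpb o ξ (xs i) (ys i)) atTop ≤ r + 8 * δ := by
      rintro r ⟨s, t, hsS, htS, hs, ht, rfl⟩
      exact compare_limsup_liminf hδ hX hξ hη hζ hηξ hζξ hηζ hxsη hysζ hs ht
    obtain ⟨Na, ma, Ma, ha⟩ := gpb_seq_bounds hδ hX hξ hη hζ hηξ hζξ hηζ hxsη hysζ
    have part2 : liminf (fun i => gpb o ξ (xs i) (ys i)) atTop ≤
        limsup (fun i => gpb o ξ (xs i) (ys i)) atTop :=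
      liminf_le_limsup (evBoundedLe fun i hi => (ha i hi).2)
        (evBoundedGe fun i hi => (ha i hi).1)
    have part1 : gpbBdry o ξ η ζ ≤ liminf (fun i => gpb o ξ (xs i) (ys i)) atTop := by
      rw [hEq]
      refine csInf_le ⟨limsup (fun i => gpb o ξ (xs i) (ys i)) atTop - 8 * δ, ?_⟩ hmem
      intro r hr
      have := hub r hr
      linarith
    have part3 : limsup (fun i => gpb o ξ (xs i) (ys i)) atTop ≤ gpbBdry o ξ η ζ + 44 * δ := by
      have h1 : limsup (fun i => gpb o ξ (xs i) (ys i)) atTop - 8 * δ ≤ sInf S := by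
        refine le_csInf ⟨_, hmem⟩ fun r hr => ?_
        have := hub r hr
        linarith
      rw [hEq]
      linarith
    exact ⟨part1, part2, part3⟩
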